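/- Let N > 5040 be an integer and let p be a prime with p < log N that does not divide N. Then G(N) < G(Np), where G(n) = σ(n)/(n · log log n). -/

import Mathlib

/-- `G n = σ(n) / (n * log log n)`. -/
noncomputable def G (n : ℕ) : ℝ :=
  (∑ d ∈ n.divisors, (d : ℝ)) / (n * Real.log (Real.log n))

theorem stmt_1 (N p : ℕ) (hN : N > 5040) (hp : p.Prime) (hpN : ¬ p ∣ N)
    (hlt : (p : ℝ) < Real.log N) :
    G N < G (N * p) := by
  have h2p : 2 ≤ p := hp.two_le
  have hq1 : (1:ℝ) < (p:ℝ) := by exact_mod_cast h2p.trans_lt' one_lt_two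
  have hq0 : (0:ℝ) < (p:ℝ) := by linarith
  have hN0 : (0:ℝ) < (N:ℝ) := by
    have : (5040:ℝ) < (N:ℝ) := by exact_mod_cast hN
    linarith
  have hlogN : 1 < Real.log N := by
    rw [show (1:ℝ) = Real.log (Real.exp 1) by simp]
    apply Real.log_lt_log (Real.exp_pos 1)
    calc Real.exp 1 < 2.7182818286 := Real.exp_one_lt_d9
      _ < (N:ℝ) := by
        have : (5041:ℝ) ≤ (N:ℝ) := by exact_mod_cast hN
        linarith
  have hL0 : 0 < Real.log N := by linarith
  have hLL : 0 < Real.log (Real.log N) := Real.log_pos hlogN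
  have hlogp_pos : 0 < Real.log p := Real.log_pos hq1
  have hlogp_lt : Real.log p < Real.log (Real.log N) := Real.log_lt_log hq0 hlt
  -- log(N*p) = log N + log p
  have hlogNp : Real.log ((N:ℝ) * (p:ℝ)) = Real.log N + Real.log p :=
    Real.log_mul (ne_of_gt hN0) (ne_of_gt hq0)
  -- key bound : log(L + log p) ≤ log L + log p / L
  have key : Real.log (Real.log N + Real.log p)
      ≤ Real.log (Real.log N) + Real.log p / Real.log N := by
    have hpos : 0 < (Real.log N + Real.log p) / Real.log N := by positivity
    have h1 : Real.log ((Real.log N + Real.log p) / Real.log N)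
        = Real.log (Real.log N + Real.log p) - Real.log (Real.log N) :=
      Real.log_div (by positivity) (ne_of_gt hL0)
    have h2 := Real.log_le_sub_one_of_pos hpos
    have h3 : (Real.log N + Real.log p) / Real.log N - 1 = Real.log p / Real.log N := by
      field_simp
      ring
    rw [h1, h3] at h2
    linarith
  have hplogp : (p:ℝ) * Real.log p < Real.log N * Real.log (Real.log N) :=
    mul_lt_mul'' hlt hlogp_lt (le_of_lt hq0) (le_of_lt hlogp_pos)
  have hdiv : (p:ℝ) * Real.log p / Real.log N < Real.log (Real.log N) := by
    rw [div_lt_iff₀ hL0]; linarith [hplogp, mul_comm (Real.log (Real.log N)) (Real.log N)]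
  -- main analytic inequality
  have hmain : (p:ℝ) * Real.log (Real.log ((N:ℝ) * (p:ℝ)))
      < ((p:ℝ) + 1) * Real.log (Real.log N) := by
    rw [hlogNp]
    have h4 : (p:ℝ) * Real.log (Real.log N + Real.log p)
        ≤ (p:ℝ) * (Real.log (Real.log N) + Real.log p / Real.log N) :=
      mul_le_mul_of_nonneg_left key (le_of_lt hq0)
    have h5 : (p:ℝ) * (Real.log p / Real.log N) < Real.log (Real.log N) := by
      rw [mul_div_assoc] at hdiv; exact hdiv
    nlinarith
  -- sigma multiplicativity
  have hσ : (∑ d ∈ (N * p).divisors, (d : ℝ))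
      = (∑ d ∈ N.divisors, (d : ℝ)) * ((p:ℝ) + 1) := by
    have hcop : N.Coprime p := (Nat.Coprime.symm ((hp.coprime_iff_not_dvd).mpr hpN))
    have h1 : (ArithmeticFunction.sigma 1) (N * p)
        = (ArithmeticFunction.sigma 1) N * (ArithmeticFunction.sigma 1) p :=
      ArithmeticFunction.isMultiplicative_sigma.map_mul_of_coprime hcop
    rw [ArithmeticFunction.sigma_one_apply, ArithmeticFunction.sigma_one_apply,
      ArithmeticFunction.sigma_one_apply] at h1
    have hps : (∑ d ∈ p.divisors, d) = p + 1 := by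
      rw [hp.divisors, Finset.sum_pair (by omega : (1:ℕ) ≠ p)]
      omega
    have h2 : ((∑ d ∈ (N * p).divisors, d : ℕ) : ℝ)
        = ((∑ d ∈ N.divisors, d : ℕ) : ℝ) * ((p:ℝ) + 1) := by
      rw [h1, hps]; push_cast; ring
    push_cast at h2
    exact h2
  have hS : 0 < (∑ d ∈ N.divisors, (d : ℝ)) := by
    apply Finset.sum_pos
    · intro d hd; exact_mod_cast Nat.pos_of_mem_divisors hd
    · exact ⟨1, Nat.one_mem_divisors.mpr (by omega)⟩
  have hLL' : 0 < Real.log (Real.log ((N:ℝ) * (p:ℝ))) := by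
    apply Real.log_pos
    rw [hlogNp]; linarith
  unfold G
  rw [hσ]
  push_cast
  rw [div_lt_div_iff₀ (by positivity) (by positivity)]
  have := mul_lt_mul_of_pos_left hmain (mul_pos hS hN0)
  nlinarith [this]
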